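/- Let P be a probability measure and X an essentially bounded real random variable. Then CVaR_P^ε[X] tends to the essential supremum of X (the maximal value X can take, up to P-null sets) as ε → 1 from the left. -/

import Mathlib

open MeasureTheory Filter

/-- Conditional Value at Risk at level `ε` of the random variable `X` under `P`. -/
noncomputable def cvar {Ω : Type*} [MeasurableSpace Ω] (P : Measure Ω) (ε : ℝ) (X : Ω → ℝ) : ℝ :=
  ⨅ t : ℝ, (t + (1 / (1 - ε)) * ∫ a, max (X a - t) 0 ∂P)

theorem cvar_aux {Ω : Type*} [MeasurableSpace Ω]
    (P : Measure Ω) [IsProbabilityMeasure P] (X : Ω → ℝ)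
    (hmeas : StronglyMeasurable X) (M : ℝ) (hbdd : ∀ᵐ a ∂P, |X a| ≤ M) :
    Tendsto (fun ε : ℝ => cvar P ε X) (nhdsWithin 1 (Set.Iio 1)) (nhds (essSup X P)) := by
  set S := essSup X P with hS
  -- basic facts
  have hXint : Integrable X P :=
    ⟨hmeas.aestronglyMeasurable, HasFiniteIntegral.of_bounded (C := M)
      (by filter_upwards [hbdd] with a h using by simpa using h)⟩
  have hint : ∀ t : ℝ, Integrable (fun a => max (X a - t) 0) P := by
    intro t
    refine ⟨((hmeas.measurable.sub measurable_const).max measurable_const).aestronglyMeasurable,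
      HasFiniteIntegral.of_bounded (C := M + |t|) ?_⟩
    filter_upwards [hbdd] with a h
    have h1 : |max (X a - t) 0| ≤ |X a - t| := by
      rw [abs_of_nonneg (le_max_right _ _)]
      exact max_le (le_abs_self _) (abs_nonneg _)
    calc ‖max (X a - t) 0‖ = |max (X a - t) 0| := rfl
      _ ≤ |X a - t| := h1
      _ ≤ |X a| + |t| := abs_sub _ _
      _ ≤ M + |t| := by linarith
  have hint_nonneg : ∀ t : ℝ, 0 ≤ ∫ a, max (X a - t) 0 ∂P := fun t =>
    integral_nonneg fun a => le_max_right _ _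
  have hbX : IsBoundedUnder (· ≤ ·) (ae P) X :=
    ⟨M, eventually_map.2 (by filter_upwards [hbdd] with a h using (abs_le.mp h).2)⟩
  have hle : ∀ᵐ a ∂P, X a ≤ S := ae_le_essSup hbX
  -- uniform lower bound on the objective for 0 ≤ ε < 1
  have hlb : ∀ ε t : ℝ, 0 ≤ ε → ε < 1 →
      (∫ a, X a ∂P) ≤ t + (1 / (1 - ε)) * ∫ a, max (X a - t) 0 ∂P := by
    intro ε t hε0 hε1
    have h1ε : 0 < 1 - ε := by linarith
    have hc : 1 ≤ 1 / (1 - ε) := by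
      rw [le_div_iff₀ h1ε]; linarith
    rcases le_or_gt t (∫ a, X a ∂P) with ht | ht
    · have hI : (∫ a, X a ∂P) - t ≤ ∫ a, max (X a - t) 0 ∂P := by
        have : ∫ a, (X a - t) ∂P ≤ ∫ a, max (X a - t) 0 ∂P :=
          integral_mono (hXint.sub (integrable_const t)) (hint t)
            fun a => le_max_left _ _
        rwa [integral_sub hXint (integrable_const t), integral_const, probReal_univ,
          smul_eq_mul, one_mul] at this
      have : (∫ a, X a ∂P) - t ≤ (1 / (1 - ε)) * ∫ a, max (X a - t) 0 ∂P := by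
        calc (∫ a, X a ∂P) - t ≤ 1 * ((∫ a, X a ∂P) - t) := by linarith
          _ ≤ (1 / (1 - ε)) * ∫ a, max (X a - t) 0 ∂P := by
            apply mul_le_mul hc hI (by linarith) (by linarith)
      linarith
    · nlinarith [hint_nonneg t]
  have hbdd_range : ∀ ε : ℝ, 0 ≤ ε → ε < 1 → BddBelow
      (Set.range fun t : ℝ => t + (1 / (1 - ε)) * ∫ a, max (X a - t) 0 ∂P) :=
    fun ε h0 h1 => ⟨∫ a, X a ∂P, by rintro x ⟨t, rfl⟩; exact hlb ε t h0 h1⟩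
  -- cvar ≤ S for 0 ≤ ε < 1
  have hub : ∀ ε : ℝ, 0 ≤ ε → ε < 1 → cvar P ε X ≤ S := by
    intro ε h0 h1
    have hz : (∫ a, max (X a - S) 0 ∂P) = 0 := by
      apply integral_eq_zero_of_ae
      filter_upwards [hle] with a h
      simp [max_eq_right, sub_nonpos.mpr h]
    calc cvar P ε X ≤ S + (1 / (1 - ε)) * ∫ a, max (X a - S) 0 ∂P :=
          ciInf_le (hbdd_range ε h0 h1) S
      _ = S := by rw [hz]; ring
  rw [tendsto_order]
  constructor
  · -- lower bound branch
    intro b hb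
    set m := (b + S) / 2 with hm
    have hbm : b < m := by rw [hm]; linarith
    have hmS : m < S := by rw [hm]; linarith
    set A := {a | m < X a} with hA
    have hAmeas : MeasurableSet A := measurableSet_lt measurable_const hmeas.measurable
    have hPA : P A ≠ 0 := by
      intro h0
      have hXm : ∀ᵐ a ∂P, X a ≤ m := by
        rw [ae_iff]
        simpa [A, not_le] using h0
      have hbX' : IsBoundedUnder (· ≥ ·) (ae P) X :=
        ⟨-M, eventually_map.2 (by filter_upwards [hbdd] with a h using (abs_le.mp h).1)⟩
      have : S ≤ m := limsup_le_of_le hbX'.isCoboundedUnder_le hXm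
      linarith
    set p := (P A).toReal with hp
    have hppos : 0 < p := ENNReal.toReal_pos hPA (measure_ne_top P A)
    have hp1 : p ≤ 1 := by
      rw [hp]
      exact ENNReal.toReal_le_of_le_ofReal one_pos.le (by simpa using prob_le_one (μ := P) (s := A))
    -- eventually ε ∈ Ioo (max (1-p) 0) 1
    have hmem : Set.Ioo (max (1 - p) 0) 1 ∈ nhdsWithin (1:ℝ) (Set.Iio 1) := by
      apply Ioo_mem_nhdsLT_of_mem
      constructor
      · exact max_lt (by linarith) one_pos
      · exact le_refl 1
    filter_upwards [hmem] with ε hε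
    obtain ⟨hεl, hε1⟩ := hε
    have hε0 : 0 ≤ ε := le_of_lt (lt_of_le_of_lt (le_max_right _ _) hεl)
    have hεp : 1 - ε < p := by have := lt_of_le_of_lt (le_max_left _ _) hεl; linarith
    have h1ε : 0 < 1 - ε := by linarith
    have hcp : 1 ≤ (1 / (1 - ε)) * p := by
      rw [div_mul_eq_mul_div, one_mul, le_div_iff₀ h1ε]
      linarith
    have : m ≤ cvar P ε X := by
      apply le_ciInf
      intro t
      rcases le_or_gt m t with ht | ht
      · have := hint_nonneg t
        have hc0 : 0 ≤ 1 / (1 - ε) := by positivity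
        nlinarith
      · -- integral ≥ (m - t) * p
        have hind : (m - t) * p ≤ ∫ a, max (X a - t) 0 ∂P := by
          have hii : Integrable (A.indicator fun _ => m - t) P :=
            (integrable_const (m - t)).indicator hAmeas
          have h1 : ∫ a, A.indicator (fun _ => m - t) a ∂P ≤ ∫ a, max (X a - t) 0 ∂P := by
            apply integral_mono hii (hint t)
            intro a
            by_cases haA : a ∈ A
            · rw [Set.indicator_of_mem haA]
              have : m < X a := haA
              exact le_max_of_le_left (by linarith)
            · rw [Set.indicator_of_notMem haA]
              exact le_max_right _ _
          rwa [integral_indicator_const _ hAmeas, smul_eq_mul, mul_comm] at h1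
        have : (m - t) * 1 ≤ (1 / (1 - ε)) * ((m - t) * p) := by
          rw [mul_comm (1 / (1 - ε)), mul_assoc]
          exact mul_le_mul_of_nonneg_left (by linarith [hcp]) (by linarith)
        have hc0 : 0 ≤ 1 / (1 - ε) := by positivity
        nlinarith [mul_le_mul_of_nonneg_left hind hc0]
    linarith [this]
  · intro b hb
    have hmem : Set.Ioo (0:ℝ) 1 ∈ nhdsWithin (1:ℝ) (Set.Iio 1) :=
      Ioo_mem_nhdsLT_of_mem ⟨one_pos, le_refl 1⟩
    filter_upwards [hmem] with ε hε
    exact lt_of_le_of_lt (hub ε hε.1.le hε.2) hb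

/-- For an essentially bounded random variable `X`, `CVaR_P^ε[X]` tends to the essential
supremum of `X` as `ε → 1` from the left. -/
theorem cvar_tendsto_essSup {Ω : Type*} [MeasurableSpace Ω]
    (P : Measure Ω) [IsProbabilityMeasure P] (X : Ω → ℝ)
    (hmeas : AEStronglyMeasurable X P) (M : ℝ) (hbdd : ∀ᵐ a ∂P, |X a| ≤ M) :
    Tendsto (fun ε : ℝ => cvar P ε X) (nhdsWithin 1 (Set.Iio 1)) (nhds (essSup X P)) := by
  set Y := hmeas.mk X with hY
  have hXY : X =ᵐ[P] Y := hmeas.ae_eq_mk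
  have hYb : ∀ᵐ a ∂P, |Y a| ≤ M := by
    filter_upwards [hbdd, hXY] with a h1 h2
    rw [← h2]; exact h1
  have h := cvar_aux P Y hmeas.stronglyMeasurable_mk M hYb
  have hc : ∀ ε : ℝ, cvar P ε Y = cvar P ε X := by
    intro ε
    unfold cvar
    refine iInf_congr fun t => ?_
    have : (∫ a, max (Y a - t) 0 ∂P) = ∫ a, max (X a - t) 0 ∂P :=
      integral_congr_ae (by filter_upwards [hXY] with a h; rw [h])
    rw [this]
  rw [essSup_congr_ae hXY]
  exact h.congr hc
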